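/- Let S(A) = {a_n} be an independent Stanley sequence, let k ≥ κ(A), set c = a_{2^k} and A_k = {a_0, a_1, ..., a_{2^k − 1}}, and suppose a_{2^k − 1} ≥ λ(A) + ω(A). Then for all integers x < y, the sets (A_k + x) ∪ (A_k + c + x) and (A_k + y) ∪ (A_k + c + y) jointly cover every integer in the set ([2y − x, 3c + 2y − x) \ (O(A) + 2y − x)) ∪ (O(A) + 3c + 2y − x). -/
import Mathlib


/-- A set of integers is 3-free if it contains no 3-term arithmetic progression. -/
def ThreeFreeSet (S : Set ℤ) : Prop :=
  ∀ x ∈ S, ∀ y ∈ S, ∀ z ∈ S, x < y → y < z → x + z ≠ 2 * y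

/-- `a` is the Stanley sequence generated greedily from the finite 3-free set `A`
of nonnegative integers containing 0: `a` first enumerates `A` in increasing order,
and for `n ≥ |A|`, `a n` is the least integer exceeding `a (n-1)` keeping the
set of terms so far 3-free. -/
def IsStanleySeq (A : Finset ℤ) (a : ℕ → ℤ) : Prop :=
  (0 : ℤ) ∈ A ∧ (∀ x ∈ A, 0 ≤ x) ∧ ThreeFreeSet ↑A ∧
  StrictMono a ∧ (∀ i < A.card, a i ∈ A) ∧
  ∀ n, A.card ≤ n →
    IsLeast {m : ℤ | a (n - 1) < m ∧ ThreeFreeSet (a '' Set.Iio n ∪ {m})} (a n)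

/-- The two defining conditions of an independent Stanley sequence,
for a given λ and κ. -/
def IndepParams (a : ℕ → ℤ) (lam : ℤ) (κ : ℕ) : Prop :=
  ∀ k, κ ≤ k →
    (∀ i < 2 ^ k, a (2 ^ k + i) = a (2 ^ k) + a i) ∧
    a (2 ^ k) = 2 * a (2 ^ k - 1) + 1 - lam

/-- A Stanley sequence is independent if `IndepParams` holds for some λ and κ. -/
def Independent (a : ℕ → ℤ) : Prop := ∃ lam κ, IndepParams a lam κ

/-- κ(A): the minimal κ witnessing independence. -/
noncomputable def kappa (a : ℕ → ℤ) : ℕ := sInf {κ | ∃ lam, IndepParams a lam κ}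

/-- λ(A), recovered from the defining equation at k = κ(A). -/
noncomputable def lambdaA (a : ℕ → ℤ) : ℤ :=
  2 * a (2 ^ kappa a - 1) + 1 - a (2 ^ kappa a)

/-- The repeat factor ρ(A) = a_{2^{κ(A)}}. -/
noncomputable def rho (a : ℕ → ℤ) : ℤ := a (2 ^ kappa a)

/-- The scaling factor α(A), satisfying a_{2^k} = α·3^k for all k ≥ κ(A). -/
noncomputable def scalingFactor (a : ℕ → ℤ) : ℚ :=
  (a (2 ^ kappa a) : ℚ) / 3 ^ kappa a

/-- An integer `x` is covered by a set `S` if there are `y < z < x` in `S`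
with `y, z, x` in arithmetic progression. -/
def Covers (S : Set ℤ) (x : ℤ) : Prop :=
  ∃ y z, y ∈ S ∧ z ∈ S ∧ y < z ∧ z < x ∧ 2 * z = y + x

/-- An integer `x` is jointly covered by `S` and `T` if there are `y < z < x`
with `y ∈ S`, `z ∈ T`, and `y, z, x` in arithmetic progression. -/
def JointlyCovers (S T : Set ℤ) (x : ℤ) : Prop :=
  ∃ y z, y ∈ S ∧ z ∈ T ∧ y < z ∧ z < x ∧ 2 * z = y + x

/-- O(A): nonnegative integers neither in the Stanley sequence nor covered by it. -/
def OSet (a : ℕ → ℤ) : Set ℤ :=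
  {x | 0 ≤ x ∧ x ∉ Set.range a ∧ ¬ Covers (Set.range a) x}

/-- ω(A): the maximum element of O(A). -/
noncomputable def omegaA (a : ℕ → ℤ) : ℤ := sSup (OSet a)

/-- The translate `S + t` of a set of integers. -/
def shift (S : Set ℤ) (t : ℤ) : Set ℤ := (· + t) '' S

/-- A triadic number: a rational whose denominator in lowest terms is a power of 3. -/
def IsTriadic (q : ℚ) : Prop := ∃ j : ℕ, q.den = 3 ^ j

/-! ### Auxiliary lemmas -/

lemma threeFree_mono {S T : Set ℤ} (h : S ⊆ T) (hT : ThreeFreeSet T) : ThreeFreeSet S :=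
  fun x hx y hy z hz hxy hyz => hT x (h hx) y (h hy) z (h hz) hxy hyz

lemma stanley_nonneg {A : Finset ℤ} {a : ℕ → ℤ} (hA : IsStanleySeq A a) :
    ∀ n, 0 ≤ a n := by
  obtain ⟨h0, hpos, _, hmono, hmem, _⟩ := hA
  have hcard : 0 < A.card := Finset.card_pos.2 ⟨0, h0⟩
  have h0' : 0 ≤ a 0 := hpos _ (hmem 0 hcard)
  intro n
  exact h0'.trans (hmono.monotone (Nat.zero_le n))

lemma stanley_threeFree_image {A : Finset ℤ} {a : ℕ → ℤ} (hA : IsStanleySeq A a) :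
    ∀ n, ThreeFreeSet (a '' Set.Iio n) := by
  obtain ⟨h0, hpos, hfree, hmono, hmem, hleast⟩ := hA
  intro n
  match n with
  | 0 => intro x hx; simp at hx
  | (m+1) =>
    by_cases hm : A.card ≤ m
    · have hset : Set.Iio (m+1) = insert m (Set.Iio m) := by
        ext t; simp only [Set.mem_Iio, Set.mem_insert_iff]; omega
      have heq : a '' Set.Iio (m+1) = a '' Set.Iio m ∪ {a m} := by
        rw [hset, Set.image_insert_eq, Set.union_singleton]
      rw [heq]
      exact (hleast m hm).1.2
    · push_neg at hm
      refine threeFree_mono ?_ hfree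
      rintro t ⟨i, hi, rfl⟩
      have hi' : i < m + 1 := hi
      exact hmem i (by omega)

lemma stanley_threeFree_range {A : Finset ℤ} {a : ℕ → ℤ} (hA : IsStanleySeq A a) :
    ThreeFreeSet (Set.range a) := by
  intro x hx y hy z hz hxy hyz
  obtain ⟨i, rfl⟩ := hx
  obtain ⟨j, rfl⟩ := hy
  obtain ⟨l, rfl⟩ := hz
  have := stanley_threeFree_image hA (i + j + l + 1)
  exact this _ ⟨i, Set.mem_Iio.mpr (by omega), rfl⟩ _ ⟨j, Set.mem_Iio.mpr (by omega), rfl⟩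
    _ ⟨l, Set.mem_Iio.mpr (by omega), rfl⟩ hxy hyz

lemma stanley_le_apply {A : Finset ℤ} {a : ℕ → ℤ} (hA : IsStanleySeq A a) :
    ∀ n : ℕ, a 0 + n ≤ a n := by
  intro n
  induction n with
  | zero => simp
  | succ m ih =>
    have : a m < a (m+1) := hA.2.2.2.1 (Nat.lt_succ_self m)
    push_cast; omega

/-- Every element of `O(A)` is at most `a (A.card - 1)`: O(A) is bounded. -/
lemma OSet_bdd {A : Finset ℤ} {a : ℕ → ℤ} (hA : IsStanleySeq A a) :
    ∀ t ∈ OSet a, t ≤ a (A.card - 1) := by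
  intro t ht
  obtain ⟨ht0, htr, htc⟩ := ht
  by_contra hgt
  push_neg at hgt
  have hA' := hA
  obtain ⟨h0, hpos, hfree, hmono, hmem, hleast⟩ := hA'
  have hcard : 0 < A.card := Finset.card_pos.2 ⟨0, h0⟩
  -- find least n with t < a n
  have hex : ∃ n : ℕ, t < a n := by
    refine ⟨(t - a 0).toNat + 1, ?_⟩
    have h1 := stanley_le_apply hA ((t - a 0).toNat + 1)
    have h2 : (t - a 0) ≤ ((t - a 0).toNat : ℤ) := Int.self_le_toNat _
    push_cast at h1 ⊢
    omega
  classical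
  set n := Nat.find hex with hn
  have hnt : t < a n := Nat.find_spec hex
  have hnmin : ∀ m < n, ¬ t < a m := fun m hm => Nat.find_min hex hm
  have hNn : A.card ≤ n := by
    by_contra hlt
    push_neg at hlt
    have : a (A.card - 1) < a n := lt_trans hgt hnt
    have h1 : A.card - 1 < n := (hmono.lt_iff_lt).1 this
    omega
  have hn1 : 0 < n := lt_of_lt_of_le hcard hNn
  have hlow : a (n-1) < t := by
    have h1 : ¬ t < a (n-1) := hnmin (n-1) (by omega)
    push_neg at h1
    rcases lt_or_eq_of_le h1 with h | h
    · exact h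
    · exact absurd ⟨n-1, h⟩ htr
  have hIL := hleast n hNn
  have htnot : t ∉ {m : ℤ | a (n - 1) < m ∧ ThreeFreeSet (a '' Set.Iio n ∪ {m})} := by
    intro hmem'
    exact absurd (hIL.2 hmem') (not_le.2 hnt)
  have hnotfree : ¬ ThreeFreeSet (a '' Set.Iio n ∪ {t}) := by
    intro hfr; exact htnot ⟨hlow, hfr⟩
  unfold ThreeFreeSet at hnotfree
  push_neg at hnotfree
  obtain ⟨X, hX, Y, hY, Z, hZ, hXY, hYZ, hsum⟩ := hnotfree
  have himlt : ∀ s ∈ a '' Set.Iio n, s < t := by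
    rintro s ⟨i, hi, rfl⟩
    have hi' : i < n := hi
    have : a i ≤ a (n-1) := hmono.monotone (by omega)
    omega
  have hZt : Z = t := by
    rcases hZ with hZ | hZ
    · exfalso
      have hZlt := himlt Z hZ
      have hXim : X ∈ a '' Set.Iio n := by
        rcases hX with h | h
        · exact h
        · exfalso; rw [Set.mem_singleton_iff] at h; omega
      have hYim : Y ∈ a '' Set.Iio n := by
        rcases hY with h | h
        · exact h
        · exfalso; rw [Set.mem_singleton_iff] at h; omega
      exact stanley_threeFree_image hA n X hXim Y hYim Z hZ hXY hYZ hsum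
    · exact Set.mem_singleton_iff.1 hZ
  subst hZt
  have hXim : X ∈ a '' Set.Iio n := by
    rcases hX with h | h
    · exact h
    · exact absurd (Set.mem_singleton_iff.1 h) (by intro he; omega)
  have hYim : Y ∈ a '' Set.Iio n := by
    rcases hY with h | h
    · exact h
    · exact absurd (Set.mem_singleton_iff.1 h) (by intro he; omega)
  refine htc ⟨X, Y, ?_, ?_, hXY, hYZ, by omega⟩
  · obtain ⟨i, _, rfl⟩ := hXim; exact ⟨i, rfl⟩
  · obtain ⟨i, _, rfl⟩ := hYim; exact ⟨i, rfl⟩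

lemma OSet_le_omega {A : Finset ℤ} {a : ℕ → ℤ} (hA : IsStanleySeq A a) :
    ∀ o ∈ OSet a, o ≤ omegaA a :=
  fun o ho => le_csSup ⟨a (A.card - 1), fun t ht => OSet_bdd hA t ht⟩ ho

lemma indep_at_kappa {a : ℕ → ℤ} (hInd : Independent a) :
    IndepParams a (lambdaA a) (kappa a) := by
  obtain ⟨lam₀, κ₀, h₀⟩ := hInd
  have hne : {κ | ∃ lam, IndepParams a lam κ}.Nonempty := ⟨κ₀, lam₀, h₀⟩
  have hmem : kappa a ∈ {κ | ∃ lam, IndepParams a lam κ} := Nat.sInf_mem hne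
  obtain ⟨lam, hlam⟩ := hmem
  have heq : lambdaA a = lam := by
    have h := (hlam (kappa a) le_rfl).2
    unfold lambdaA
    omega
  rw [heq]
  exact hlam

/-- Lemma 3.2(d): for `x < y`, `(A_k + x) ∪ (A_k + c + x)` and
`(A_k + y) ∪ (A_k + c + y)` jointly cover
`([2y−x, 3c+2y−x) \ (O(A) + 2y − x)) ∪ (O(A) + 3c + 2y − x)`. -/
theorem cover_part_d (A : Finset ℤ) (a : ℕ → ℤ)
    (hA : IsStanleySeq A a) (hInd : Independent a) (k : ℕ) (hk : kappa a ≤ k)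
    (c : ℤ) (hc : c = a (2 ^ k))
    (Ak : Set ℤ) (hAk : Ak = a '' Set.Iio (2 ^ k))
    (hbound : lambdaA a + omegaA a ≤ a (2 ^ k - 1)) :
    ∀ x y : ℤ, x < y →
      ∀ z ∈ (Set.Ico (2 * y - x) (3 * c + 2 * y - x) \ shift (OSet a) (2 * y - x)) ∪
          shift (OSet a) (3 * c + 2 * y - x),
        JointlyCovers (shift Ak x ∪ shift Ak (c + x)) (shift Ak y ∪ shift Ak (c + y)) z := by
  have hparams := indep_at_kappa hInd
  set lam := lambdaA a with hlamdef
  set ω := omegaA a with hωdef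
  obtain ⟨hrec0, hceq0⟩ := hparams k hk
  obtain ⟨hrec1, hceq1⟩ := hparams (k+1) (le_trans hk (Nat.le_succ k))
  have hmono : StrictMono a := hA.2.2.2.1
  have hnonneg := stanley_nonneg hA
  have hpow : (1:ℕ) ≤ 2 ^ k := Nat.one_le_two_pow
  -- basic facts
  have hrec : ∀ i < 2 ^ k, a (2 ^ k + i) = c + a i := by
    intro i hi; rw [hc]; exact hrec0 i hi
  have hceq : c = 2 * a (2 ^ k - 1) + 1 - lam := by rw [hc]; exact hceq0
  have hup : a (2 ^ (k+1)) = 3 * c := by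
    have h1 : a (2 ^ (k+1) - 1) = c + a (2 ^ k - 1) := by
      have he : 2 ^ (k+1) - 1 = 2 ^ k + (2 ^ k - 1) := by
        have : 2 ^ (k+1) = 2 ^ k + 2 ^ k := by ring
        omega
      rw [he]
      exact hrec (2 ^ k - 1) (by omega)
    rw [hceq1, h1]
    omega
  have ha_lt_c : ∀ i < 2 ^ k, a i < c := by
    intro i hi; rw [hc]; exact hmono hi
  have ha_le : ∀ i < 2 ^ k, a i ≤ a (2 ^ k - 1) := by
    intro i hi; exact hmono.monotone (by omega)
  have hA2 : 0 ≤ a (2 ^ k - 1) := hnonneg _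
  have hc_pos : 0 < c := by
    have : a 0 < a (2 ^ k) := hmono (by omega)
    have := hnonneg 0
    omega
  -- splitting terms below 3c
  have hterm3c : ∀ t ∈ Set.range a, t < 3 * c →
      (∃ i < 2 ^ k, t = a i) ∨ (∃ i < 2 ^ k, t = c + a i) := by
    rintro t ⟨n, rfl⟩ htlt
    have hn : n < 2 ^ (k+1) := by
      by_contra hge
      push_neg at hge
      have : a (2 ^ (k+1)) ≤ a n := hmono.monotone hge
      omega
    by_cases hnk : n < 2 ^ k
    · exact Or.inl ⟨n, hnk, rfl⟩
    · push_neg at hnk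
      refine Or.inr ⟨n - 2 ^ k, ?_, ?_⟩
      · have : 2 ^ (k+1) = 2 ^ k + 2 ^ k := by ring
        omega
      · have h2 : 2 ^ (k+1) = 2 ^ k + 2 ^ k := by ring
        rw [← hrec (n - 2 ^ k) (by omega)]
        congr 1
        omega
  have ho_le : ∀ o ∈ OSet a, o ≤ ω := OSet_le_omega hA
  have hω_lt_c : ω < c := by
    -- lam + ω ≤ a(2^k-1), c = 2a+1-lam, a ≥ 0
    omega
  -- membership helper
  have hmemB : ∀ t, ((∃ i < 2 ^ k, t = a i) ∨ (∃ i < 2 ^ k, t = c + a i)) →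
      ∀ s : ℤ, t + s ∈ shift Ak s ∪ shift Ak (c + s) := by
    rintro t (⟨i, hi, rfl⟩ | ⟨i, hi, rfl⟩) s
    · exact Or.inl ⟨a i, by rw [hAk]; exact ⟨i, hi, rfl⟩, rfl⟩
    · exact Or.inr ⟨a i, by rw [hAk]; exact ⟨i, hi, rfl⟩, by ring⟩
  -- covering lemma for c + o, o ∈ O(A)
  have hOcover : ∀ o ∈ OSet a, ∃ i < 2 ^ k, ∃ j < 2 ^ k,
      a i < a j ∧ 2 * a j = a i + (c + o) := by
    intro o ho
    obtain ⟨ho0, hor, hoc⟩ := ho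
    have hoω : o ≤ ω := ho_le o ⟨ho0, hor, hoc⟩
    have hw0 : 0 ≤ c + o := by omega
    have hwlt : c + o < 3 * c := by omega
    have hwr : c + o ∉ Set.range a := by
      intro hwr
      rcases hterm3c _ hwr hwlt with ⟨i, hi, he⟩ | ⟨i, hi, he⟩
      · have := ha_lt_c i hi; omega
      · exact hor ⟨i, by omega⟩
    have hwO : c + o ∉ OSet a := by
      intro hwO
      have := ho_le _ hwO
      omega
    have hwc : Covers (Set.range a) (c + o) := by
      by_contra hnc
      exact hwO ⟨hw0, hwr, hnc⟩
    obtain ⟨p', q', hp'r, hq'r, hpq, hqw, hsum⟩ := hwc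
    have hq3 : q' < 3 * c := by omega
    have hp3 : p' < 3 * c := by omega
    rcases hterm3c q' hq'r hq3 with ⟨m, hm, rfl⟩ | ⟨m, hm, heq⟩
    · -- q' = a m < c
      rcases hterm3c p' hp'r hp3 with ⟨l, hl, rfl⟩ | ⟨l, hl, heq'⟩
      · exact ⟨l, hl, m, hm, hpq, hsum⟩
      · exfalso
        have h1 := ha_lt_c m hm
        have h2 := hnonneg l
        omega
    · -- q' = c + a m : derive contradictions
      exfalso
      have ham_lt : a m < o := by omega
      rcases hterm3c p' hp'r hp3 with ⟨l, hl, heq'⟩ | ⟨l, hl, heq'⟩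
      · -- p' = a l : contradiction via hbound
        have h1 := ha_le l hl
        have h2 := hnonneg m
        omega
      · -- p' = c + a l : o is covered, contradiction
        refine hoc ⟨a l, a m, ⟨l, rfl⟩, ⟨m, rfl⟩, by omega, ham_lt, by omega⟩
  -- main argument
  intro x y hxy z hz
  rcases hz with ⟨⟨hz1, hz2⟩, hz3⟩ | hz'
  · -- z in the interval, not in O + (2y - x)
    set w := z - (2 * y - x) with hwdef
    have hw0 : 0 ≤ w := by omega
    have hw3 : w < 3 * c := by omega
    have hwO : w ∉ OSet a := by
      intro hwO
      exact hz3 ⟨w, hwO, by show w + (2 * y - x) = z; omega⟩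
    have hcase : w ∈ Set.range a ∨ Covers (Set.range a) w := by
      by_contra hnn
      push_neg at hnn
      exact hwO ⟨hw0, hnn.1, hnn.2⟩
    rcases hcase with hwr | hwc
    · -- w is a term
      have hsplit := hterm3c w hwr hw3
      refine ⟨w + x, w + y, hmemB w hsplit x, hmemB w hsplit y, by omega, by omega, by omega⟩
    · -- w is covered
      obtain ⟨p', q', hp'r, hq'r, hpq, hqw, hsum⟩ := hwc
      have hq3 : q' < 3 * c := by omega
      have hp3 : p' < 3 * c := by omega
      refine ⟨p' + x, q' + y, hmemB p' (hterm3c p' hp'r hp3) x,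
        hmemB q' (hterm3c q' hq'r hq3) y, by omega, by omega, by omega⟩
  · -- z ∈ O + (3c + 2y - x)
    obtain ⟨o, ho, hoz⟩ := hz'
    obtain ⟨i, hi, j, hj, hij, hsum⟩ := hOcover o ho
    have ho0 : 0 ≤ o := ho.1
    have hjc := ha_lt_c j hj
    refine ⟨a i + x, (c + a j) + y, ?_, ?_, by omega, ?_, ?_⟩
    · exact Or.inl ⟨a i, by rw [hAk]; exact ⟨i, hi, rfl⟩, rfl⟩
    · exact Or.inr ⟨a j, by rw [hAk]; exact ⟨j, hj, rfl⟩, by ring⟩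
    · -- (c + a j) + y < z = o + (3c + 2y - x)
      simp only [← hoz]
      omega
    · simp only [← hoz]
      omega
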